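/- Let R be a commutative local ring in which 2 is not invertible, and let A be an n×n matrix with integer entries satisfying A³ = 1. Then there exist nonnegative integers r and p with n = r + 2p such that the image of A in M_n(R) is conjugate by a matrix in GL_n(R) to the block-diagonal matrix consisting of the r×r identity block followed by p copies of the 2×2 block [[0, −1], [1, −1]]. -/

import Mathlib

open Matrix Submodule Module

private theorem pairBasis {n : ℕ} (φ : (Fin n → ZMod 2) →ₗ[ZMod 2] (Fin n → ZMod 2))
    (d : ℕ) :
    ∀ (W : Submodule (ZMod 2) (Fin n → ZMod 2)),
      Module.finrank (ZMod 2) W ≤ d → (∀ x ∈ W, φ x ∈ W) →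
      (∀ x ∈ W, φ (φ x) + φ x + x = 0) →
      ∃ (p : ℕ) (v : Fin p → (Fin n → ZMod 2)),
        LinearIndependent (ZMod 2)
          (fun ij : Fin 2 × Fin p => if ij.1 = 0 then v ij.2 else φ (v ij.2)) ∧
        Submodule.span (ZMod 2)
          (Set.range fun ij : Fin 2 × Fin p => if ij.1 = 0 then v ij.2 else φ (v ij.2)) = W := by
  have hadd : ∀ x : Fin n → ZMod 2, x + x = 0 := by
    intro x
    rw [← two_smul (ZMod 2), show (2 : ZMod 2) = 0 by decide, zero_smul]
  have hneg : ∀ x : Fin n → ZMod 2, -x = x := by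
    intro x
    rw [← neg_one_smul (ZMod 2), show (-1 : ZMod 2) = 1 by decide, one_smul]
  have hcases : ∀ s : ZMod 2, s = 0 ∨ s = 1 := by decide
  induction d with
  | zero =>
    intro W hr _ _
    have hW : W = ⊥ := Submodule.finrank_eq_zero.mp (Nat.le_zero.mp hr)
    refine ⟨0, ![], linearIndependent_empty_type, ?_⟩
    rw [Set.range_eq_empty, Submodule.span_empty, hW]
  | succ d ih =>
    intro W hr hinv hφW
    have hφ2 : ∀ x ∈ W, φ (φ x) = φ x + x := by
      intro x hx
      have h : φ (φ x) + (φ x + x) = 0 := by rw [← add_assoc]; exact hφW x hx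
      rw [← hneg (φ x + x)]
      exact eq_neg_of_add_eq_zero_left h
    have hφ3 : ∀ x ∈ W, φ (φ (φ x)) = x := by
      intro x hx
      calc φ (φ (φ x)) = φ (φ x) + φ x := hφ2 _ (hinv x hx)
      _ = (φ x + x) + φ x := by rw [hφ2 x hx]
      _ = x := by rw [add_right_comm, hadd, zero_add]
    by_cases hbot : W = ⊥
    · refine ⟨0, ![], linearIndependent_empty_type, ?_⟩
      rw [Set.range_eq_empty, Submodule.span_empty, hbot]
    · obtain ⟨v₀, hv₀W, hv₀⟩ := Submodule.exists_mem_ne_zero_of_ne_bot hbot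
      have hpair : LinearIndependent (ZMod 2) ![v₀, φ v₀] := by
        rw [LinearIndependent.pair_iff]
        intro s t hst
        rcases hcases s with hs | hs <;> rcases hcases t with ht | ht <;>
          subst hs <;> subst ht
        · exact ⟨rfl, rfl⟩
        · exfalso
          rw [zero_smul, one_smul, zero_add] at hst
          have h := hφW v₀ hv₀W
          rw [hst, map_zero, zero_add, zero_add] at h
          exact hv₀ h
        · exfalso
          rw [one_smul, zero_smul, add_zero] at hst
          exact hv₀ hst
        · exfalso
          rw [one_smul, one_smul] at hst
          have h1 : φ v₀ = v₀ := by
            have h2 := eq_neg_of_add_eq_zero_right hst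
            rw [hneg] at h2; exact h2
          have h := hφW v₀ hv₀W
          rw [h1, h1, hadd, zero_add] at h
          exact hv₀ h
      -- the 2-dimensional invariant subspace S
      set S : Submodule (ZMod 2) (Fin n → ZMod 2) :=
        Submodule.span (ZMod 2) (Set.range ![v₀, φ v₀]) with hSdef
      have hv₀S : v₀ ∈ S := Submodule.subset_span ⟨0, rfl⟩
      have hφv₀S : φ v₀ ∈ S := Submodule.subset_span ⟨1, rfl⟩
      have hSW : S ≤ W := by
        rw [hSdef, Submodule.span_le]
        rintro x ⟨i, rfl⟩
        rcases hcases i with h | h <;> subst h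
        · exact hv₀W
        · exact hinv _ hv₀W
      have hSinv : ∀ x ∈ S, φ x ∈ S := by
        intro x hx
        induction hx using Submodule.span_induction with
        | mem y hy =>
          obtain ⟨i, rfl⟩ := hy
          rcases hcases i with h | h <;> subst h
          · exact hφv₀S
          · show φ (φ v₀) ∈ S
            rw [hφ2 v₀ hv₀W]
            exact S.add_mem hφv₀S hv₀S
        | zero => rw [map_zero]; exact S.zero_mem
        | add y z _ _ hy hz => rw [map_add]; exact S.add_mem hy hz
        | smul c y _ hy => rw [LinearMap.map_smul]; exact S.smul_mem c hy
      -- a projector onto S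
      obtain ⟨C, hC⟩ := Submodule.exists_isCompl S
      set π : (Fin n → ZMod 2) →ₗ[ZMod 2] (Fin n → ZMod 2) :=
        S.subtype ∘ₗ (S.linearProjOfIsCompl C hC) with hπdef
      have hπS : ∀ x ∈ S, π x = x := by
        intro x hx
        show (S.projectionOnto C hC x : Fin n → ZMod 2) = x
        rw [Submodule.projectionOnto_apply_left hC ⟨x, hx⟩]
      have hπmem : ∀ x, π x ∈ S := fun x => (S.linearProjOfIsCompl C hC x).2
      -- Maschke averaging
      set π' : (Fin n → ZMod 2) →ₗ[ZMod 2] (Fin n → ZMod 2) :=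
        π + (φ ∘ₗ π ∘ₗ (φ ∘ₗ φ)) + ((φ ∘ₗ φ) ∘ₗ π ∘ₗ φ) with hπ'def
      have hπ'apply : ∀ x, π' x = π x + φ (π (φ (φ x))) + φ (φ (π (φ x))) := by
        intro x; rfl
      have hπ'mem : ∀ x, π' x ∈ S := by
        intro x
        rw [hπ'apply]
        exact S.add_mem (S.add_mem (hπmem x) (hSinv _ (hπmem _))) (hSinv _ (hSinv _ (hπmem _)))
      have hπ'S : ∀ x ∈ S, π' x = x := by
        intro x hx
        rw [hπ'apply, hπS x hx, hπS _ (hSinv _ (hSinv _ hx)), hπS _ (hSinv _ hx),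
          hφ3 x (hSW hx), hadd, zero_add]
      have hπ'comm : ∀ x ∈ W, π' (φ x) = φ (π' x) := by
        intro x hx
        rw [hπ'apply, hπ'apply, map_add, map_add, hφ3 x hx,
          hφ3 (π (φ x)) (hSW (hπmem _))]
        abel
      have hπ'idem : ∀ x, π' (π' x) = π' x := fun x => hπ'S _ (hπ'mem x)
      -- the complement inside W
      set W' : Submodule (ZMod 2) (Fin n → ZMod 2) := W ⊓ LinearMap.ker π' with hW'def
      have hW'inv : ∀ x ∈ W', φ x ∈ W' := by
        rintro x ⟨hxW, hxk⟩
        refine ⟨hinv _ hxW, ?_⟩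
        show π' (φ x) = 0
        rw [hπ'comm x hxW, show π' x = 0 from hxk, map_zero]
      have hsup : S ⊔ W' = W := by
        apply le_antisymm
        · exact sup_le hSW inf_le_left
        · intro x hx
          have h1 : π' x ∈ S := hπ'mem x
          have h2 : x - π' x ∈ W' := by
            refine ⟨W.sub_mem hx (hSW h1), ?_⟩
            show π' (x - π' x) = 0
            rw [map_sub, hπ'idem, sub_self]
          have : x = π' x + (x - π' x) := by abel
          rw [this]
          exact Submodule.add_mem_sup h1 h2
      have hdisj : S ⊓ W' = ⊥ := by
        rw [eq_bot_iff]
        rintro x ⟨hxS, _, hxk⟩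
        have : π' x = 0 := hxk
        rw [hπ'S x hxS] at this
        simp [this]
      have hrankS : finrank (ZMod 2) S = 2 := by
        rw [hSdef, finrank_span_eq_card hpair, Fintype.card_fin]
      have hrankW' : finrank (ZMod 2) W' ≤ d := by
        have h := Submodule.finrank_sup_add_finrank_inf_eq S W'
        rw [hsup, hdisj, hrankS, finrank_bot, add_zero] at h
        omega
      obtain ⟨p', v', hli', hspan'⟩ := ih W' hrankW' hW'inv (fun x hx => hφW x hx.1)
      -- combine
      refine ⟨p' + 1, Fin.cons v₀ v', ?_, ?_⟩ <;>
      · set F' : Fin 2 × Fin p' → (Fin n → ZMod 2) :=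
          fun ij => if ij.1 = 0 then v' ij.2 else φ (v' ij.2) with hF'def
        set F : Fin 2 × Fin (p' + 1) → (Fin n → ZMod 2) :=
          fun ij => if ij.1 = 0 then (Fin.cons v₀ v' : Fin (p'+1) → _) ij.2
            else φ ((Fin.cons v₀ v' : Fin (p'+1) → _) ij.2) with hFdef
        have hq : ∃ q : (Fin 2 ⊕ (Fin 2 × Fin p')) ≃ (Fin 2 × Fin (p' + 1)),
            F ∘ q = Sum.elim ![v₀, φ v₀] F' := by
          refine ⟨⟨fun x => Sum.elim (fun s => (s, 0)) (fun sj => (sj.1, sj.2.succ)) x,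
            fun sj => Fin.cases (Sum.inl sj.1) (fun j' => Sum.inr (sj.1, j')) sj.2,
            ?_, ?_⟩, ?_⟩
          · rintro (s | ⟨s, j⟩) <;> simp
          · rintro ⟨s, j⟩
            refine Fin.cases ?_ (fun j' => ?_) j <;> simp
          · funext x
            rcases x with s | ⟨s, j⟩
            · rcases hcases s with h | h <;> subst h <;> simp [hFdef] <;> rfl
            · simp [hFdef, hF'def]
        obtain ⟨q, hqf⟩ := hq
        have hdisj' : Disjoint (Submodule.span (ZMod 2) (Set.range ![v₀, φ v₀]))
            (Submodule.span (ZMod 2) (Set.range F')) := by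
          rw [hspan', disjoint_iff, ← hSdef, hdisj]
        have hli : LinearIndependent (ZMod 2) F := by
          rw [← linearIndependent_equiv q (f := F), hqf]
          exact LinearIndependent.sum_type hpair hli' hdisj'
        have hrange : Set.range F = Set.range (F ∘ q) :=
          (q.surjective.range_comp F).symm
        have hsp : Submodule.span (ZMod 2) (Set.range F) = W := by
          rw [hrange, hqf, Set.Sum.elim_range, Submodule.span_union, hspan', ← hSdef, hsup]
        first
        | exact hli
        | exact hsp

set_option maxHeartbeats 1000000 in
/-- Let `R` be a commutative local ring in which `2` is not invertible, and let `A` be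
an `n × n` integer matrix with `A³ = 1`.  Then there are `r, p` with `n = r + 2p` such
that the image of `A` in `M_n(R)` is conjugate in `GL_n(R)` to the block-diagonal
matrix with an `r × r` identity block and `p` copies of the block `[[0, -1], [1, -1]]`. -/
theorem stmt5 {R : Type*} [CommRing R] [IsLocalRing R] (h2 : ¬ IsUnit (2 : R)) (n : ℕ)
    (A : Matrix (Fin n) (Fin n) ℤ) (hA : A ^ 3 = 1) :
    ∃ r p : ℕ, n = r + 2 * p ∧
      ∃ (e : Fin n ≃ (Fin r ⊕ Fin 2 × Fin p)) (g : (Matrix (Fin n) (Fin n) R)ˣ),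
        A.map (Int.cast : ℤ → R) =
          (g : Matrix (Fin n) (Fin n) R) *
            ((Matrix.fromBlocks (1 : Matrix (Fin r) (Fin r) R) 0 0
                (Matrix.blockDiagonal fun _ : Fin p =>
                  (!![0, -1; 1, -1] : Matrix (Fin 2) (Fin 2) R))).submatrix e e) *
            ((g⁻¹ : (Matrix (Fin n) (Fin n) R)ˣ) : Matrix (Fin n) (Fin n) R) := by
  classical
  -- 3 is a unit in R
  have h3 : IsUnit (3 : R) := by
    rcases IsLocalRing.isUnit_or_isUnit_one_sub_self (-2 : R) with h | h
    · exact absurd (by simpa using h.neg) h2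
    · have h31 : (1 : R) - (-2) = 3 := by norm_num
      rwa [h31] at h
  obtain ⟨c, hc⟩ : ∃ c : R, 3 * c = 1 := h3.exists_right_inv
  -- the matrix over ZMod 2
  set A₂ : Matrix (Fin n) (Fin n) (ZMod 2) := A.map (Int.cast : ℤ → ZMod 2) with hA₂def
  have hA₂3 : A₂ ^ 3 = 1 := by
    have h := congrArg (Int.castRingHom (ZMod 2)).mapMatrix hA
    rw [map_pow, _root_.map_one] at h
    simpa [RingHom.mapMatrix_apply, hA₂def] using h
  have h2M : (2 : Matrix (Fin n) (Fin n) (ZMod 2)) = 0 := by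
    have h11 : (2 : Matrix (Fin n) (Fin n) (ZMod 2)) = 1 + 1 := one_add_one_eq_two.symm
    rw [h11]
    ext i j
    simp only [Matrix.add_apply, Matrix.one_apply, Matrix.zero_apply]
    split <;> decide
  set ε : Matrix (Fin n) (Fin n) (ZMod 2) := A₂ * A₂ + A₂ + 1 with hεdef
  have hεε : ε * ε = ε := by
    have e1 : ε * ε = A₂ ^ 3 * A₂ + A₂ * A₂ + 1 + 2 * (A₂ ^ 3 + A₂ * A₂ + A₂) := by
      rw [hεdef]; noncomm_ring
    rw [hA₂3, h2M, zero_mul, add_zero, one_mul] at e1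
    rw [e1, hεdef]; abel
  have hA₂ε : A₂ * ε = ε := by
    have e1 : A₂ * ε = A₂ ^ 3 + A₂ * A₂ + A₂ := by rw [hεdef]; noncomm_ring
    rw [hA₂3] at e1
    rw [e1, hεdef]; abel
  have hεA₂ : ε * A₂ = A₂ * ε := by rw [hεdef]; noncomm_ring
  set φ := A₂.mulVecLin with hφdef
  set W : Submodule (ZMod 2) (Fin n → ZMod 2) := LinearMap.ker ε.mulVecLin with hWdef
  have hWmem : ∀ x, x ∈ W ↔ ε.mulVec x = 0 := by
    intro x; rw [hWdef, LinearMap.mem_ker, Matrix.mulVecLin_apply]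
  have hWinv : ∀ x ∈ W, φ x ∈ W := by
    intro x hx
    rw [hWmem] at hx ⊢
    rw [hφdef, Matrix.mulVecLin_apply, Matrix.mulVec_mulVec, hεA₂,
      ← Matrix.mulVec_mulVec, hx, Matrix.mulVec_zero]
  have hWrel : ∀ x ∈ W, φ (φ x) + φ x + x = 0 := by
    intro x hx
    rw [hWmem] at hx
    rw [hφdef, Matrix.mulVecLin_apply, Matrix.mulVecLin_apply, Matrix.mulVec_mulVec]
    have : (A₂ * A₂) *ᵥ x + A₂ *ᵥ x + x = (A₂ * A₂ + A₂ + 1) *ᵥ x := by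
      rw [Matrix.add_mulVec, Matrix.add_mulVec, Matrix.one_mulVec]
    rw [this, ← hεdef, hx]
  obtain ⟨p, v, hli, hspan⟩ :=
    pairBasis φ (Module.finrank (ZMod 2) W) W le_rfl hWinv hWrel
  -- the fixed part
  set U : Submodule (ZMod 2) (Fin n → ZMod 2) := LinearMap.range ε.mulVecLin with hUdef
  have hUfix : ∀ x ∈ U, ε.mulVec x = x := by
    rintro x ⟨y, rfl⟩
    rw [Matrix.mulVecLin_apply, Matrix.mulVec_mulVec, hεε]
  set r := Module.finrank (ZMod 2) U with hrdef
  set bU := Module.finBasis (ZMod 2) U with hbUdef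
  set u : Fin r → (Fin n → ZMod 2) := fun i => (bU i : Fin n → ZMod 2) with hudef
  have hu_li : LinearIndependent (ZMod 2) u :=
    bU.linearIndependent.map' U.subtype (Submodule.ker_subtype U)
  have hu_span : Submodule.span (ZMod 2) (Set.range u) = U := by
    have h1 : Set.range u = U.subtype '' (Set.range bU) := by
      rw [← Set.range_comp]; rfl
    rw [h1, ← Submodule.map_span, bU.span_eq, Submodule.map_top, Submodule.range_subtype]
  have hUW_sup : U ⊔ W = ⊤ := by
    rw [eq_top_iff]
    intro x _
    have h1 : ε.mulVec x ∈ U := ⟨x, rfl⟩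
    have h2 : x - ε.mulVec x ∈ W := by
      rw [hWmem, Matrix.mulVec_sub, Matrix.mulVec_mulVec, hεε, sub_self]
    have : x = ε.mulVec x + (x - ε.mulVec x) := by abel
    rw [this]
    exact Submodule.add_mem_sup h1 h2
  have hUW_disj : Disjoint U W := by
    rw [disjoint_iff, eq_bot_iff]
    intro x hx
    obtain ⟨hxU, hxW⟩ := Submodule.mem_inf.mp hx
    rw [hWmem] at hxW
    have hfix := hUfix x hxU
    rw [hxW] at hfix
    rw [Submodule.mem_bot]
    exact hfix.symm
  -- the combined basis
  set F : Fin 2 × Fin p → (Fin n → ZMod 2) :=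
    fun ij => if ij.1 = 0 then v ij.2 else φ (v ij.2) with hFdef
  set Bfam : (Fin r ⊕ Fin 2 × Fin p) → (Fin n → ZMod 2) := Sum.elim u F with hBfamdef
  have hBli : LinearIndependent (ZMod 2) Bfam := by
    refine LinearIndependent.sum_type hu_li hli ?_
    rw [hu_span, hspan]; exact hUW_disj
  have hBspan : Submodule.span (ZMod 2) (Set.range Bfam) = ⊤ := by
    rw [hBfamdef, Set.Sum.elim_range, Submodule.span_union, hu_span, hspan, hUW_sup]
  set B : Basis (Fin r ⊕ Fin 2 × Fin p) (ZMod 2) (Fin n → ZMod 2) :=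
    Basis.mk hBli hBspan.ge with hBdef
  set e : Fin n ≃ (Fin r ⊕ Fin 2 × Fin p) :=
    (Pi.basisFun (ZMod 2) (Fin n)).indexEquiv B with hedef
  have hn : n = r + 2 * p := by
    have h := Fintype.card_congr e
    simpa [two_mul] using h
  refine ⟨r, p, hn, e, ?_⟩
  -- now over R
  set M : Matrix (Fin n) (Fin n) R := A.map (Int.cast : ℤ → R) with hMdef
  have hM3 : M ^ 3 = 1 := by
    have h := congrArg (Int.castRingHom R).mapMatrix hA
    rw [map_pow, _root_.map_one] at h
    simpa [RingHom.mapMatrix_apply, hMdef] using h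
  set X : Matrix (Fin n) (Fin n) R := M * M + M + 1 with hXdef
  have h3X : (3 : R) • X = 3 * X := by rw [Algebra.smul_def, map_ofNat]
  have hXX : X * X = 3 * X := by
    have e2 : X * X - 3 * X = (M ^ 3 - 1) * (M + 2) := by rw [hXdef]; noncomm_ring
    rw [hM3, sub_self, zero_mul] at e2
    rw [← sub_eq_zero]; exact e2
  set e₁ : Matrix (Fin n) (Fin n) R := c • X with he₁def
  set f₁ : Matrix (Fin n) (Fin n) R := 1 - e₁ with hf₁def
  have hMX : M * X = X := by
    have e2 : M * X - X = M ^ 3 - 1 := by rw [hXdef]; noncomm_ring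
    rw [hM3, sub_self] at e2
    rw [← sub_eq_zero]; exact e2
  have hMe₁ : M * e₁ = e₁ := by rw [he₁def, mul_smul_comm, hMX]
  have hXf₁ : X * f₁ = 0 := by
    rw [hf₁def, mul_sub, mul_one, he₁def, mul_smul_comm, hXX, ← h3X, smul_smul,
      show c * (3 : R) = 3 * c from mul_comm c 3, hc, one_smul, sub_self]
  have hMMf₁ : (M * M) * f₁ = -f₁ - M * f₁ := by
    have h := hXf₁
    rw [hXdef, add_mul, add_mul, one_mul] at h
    have h2' : (M * M) * f₁ + (M * f₁ + f₁) = 0 := by rw [← add_assoc]; exact h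
    rw [eq_neg_of_add_eq_zero_left h2']; abel
  -- integer lifts of the basis vectors
  set l : ZMod 2 → R := fun a => ((a.val : ℤ) : R) with hldef
  set Wv : (Fin r ⊕ Fin 2 × Fin p) → (Fin n → R) :=
    Sum.elim (fun i => e₁.mulVec (fun x => l (u i x)))
      (fun sj =>
        if sj.1 = 0 then f₁.mulVec (fun x => l (v sj.2 x))
        else M.mulVec (f₁.mulVec (fun x => l (v sj.2 x)))) with hWvdef
  set G : Matrix (Fin n) (Fin n) R := Matrix.of (fun x y => Wv (e y) x) with hGdef
  set Bblk : Matrix (Fin r ⊕ Fin 2 × Fin p) (Fin r ⊕ Fin 2 × Fin p) R :=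
    Matrix.fromBlocks 1 0 0 (Matrix.blockDiagonal fun _ : Fin p =>
      (!![0, -1; 1, -1] : Matrix (Fin 2) (Fin 2) R)) with hBblkdef
  have hMG : M * G = G * Bblk.submatrix e e := by
    ext x y
    rw [Matrix.mul_apply, Matrix.mul_apply]
    have hLHS : ∑ z, M x z * G z y = M.mulVec (Wv (e y)) x := by
      simp [Matrix.mulVec, dotProduct, hGdef]
    have hRHS : ∑ z, G x z * (Bblk.submatrix e e) z y
        = ∑ i, Wv i x * Bblk i (e y) := by
      rw [← Equiv.sum_comp e (fun i => Wv i x * Bblk i (e y))]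
      simp [hGdef, Matrix.submatrix_apply]
    rw [hLHS, hRHS]
    rcases hiy : e y with i | ⟨s, j⟩
    · rw [Fintype.sum_sum_type]
      simp only [hBblkdef, Matrix.fromBlocks_apply₁₁, Matrix.fromBlocks_apply₂₁,
        Matrix.zero_apply, mul_zero, Finset.sum_const_zero, add_zero, Matrix.one_apply,
        mul_ite, mul_one]
      rw [Finset.sum_ite_eq' Finset.univ i (fun a => Wv (Sum.inl a) x)]
      simp only [Finset.mem_univ, if_true]
      rw [hWvdef]
      simp only [Sum.elim_inl]
      rw [Matrix.mulVec_mulVec, hMe₁]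
    · rw [Fintype.sum_sum_type]
      simp only [hBblkdef, Matrix.fromBlocks_apply₁₂, Matrix.fromBlocks_apply₂₂,
        Matrix.zero_apply, mul_zero, Finset.sum_const_zero, zero_add]
      rw [Fintype.sum_prod_type]
      simp only [Matrix.blockDiagonal_apply, mul_ite, mul_zero]
      have hj : ∀ t : Fin 2, ∑ j' : Fin p,
          (if j' = j then Wv (Sum.inr (t, j')) x * !![(0:R), -1; 1, -1] t s else 0)
          = Wv (Sum.inr (t, j)) x * !![(0:R), -1; 1, -1] t s := by
        intro t
        rw [Finset.sum_ite_eq' Finset.univ j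
          (fun j' => Wv (Sum.inr (t, j')) x * !![(0:R), -1; 1, -1] t s)]
        simp
      simp only [hj]
      rw [Fin.sum_univ_two]
      fin_cases s
      · -- s = 0
        show (M *ᵥ Wv (Sum.inr (0, j))) x =
          Wv (Sum.inr (0, j)) x * !![(0:R), -1; 1, -1] 0 0 +
          Wv (Sum.inr (1, j)) x * !![(0:R), -1; 1, -1] 1 0
        simp only [hWvdef, Sum.elim_inr, Matrix.cons_val', Matrix.cons_val_zero,
          Matrix.cons_val_one, Matrix.head_cons, Matrix.head_fin_const, Matrix.empty_val',
          Matrix.cons_val_fin_one, Matrix.of_apply]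
        norm_num
      · -- s = 1
        show (M *ᵥ Wv (Sum.inr (1, j))) x =
          Wv (Sum.inr (0, j)) x * !![(0:R), -1; 1, -1] 0 1 +
          Wv (Sum.inr (1, j)) x * !![(0:R), -1; 1, -1] 1 1
        simp only [hWvdef, Sum.elim_inr, Matrix.cons_val', Matrix.cons_val_zero,
          Matrix.cons_val_one, Matrix.head_cons, Matrix.head_fin_const, Matrix.empty_val',
          Matrix.cons_val_fin_one, Matrix.of_apply]
        norm_num
        rw [← mul_assoc, hMMf₁, Matrix.sub_mulVec, Matrix.neg_mulVec]
        simp only [Pi.sub_apply, Pi.neg_apply]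
        ring
  -- residues
  set k := IsLocalRing.ResidueField R with hkdef
  set ρ : R →+* k := IsLocalRing.residue R with hρdef
  have h2k : (2 : k) = 0 := by
    have hm : (2 : R) ∈ IsLocalRing.maximalIdeal R := h2
    have h := (IsLocalRing.residue_eq_zero_iff (2 : R)).mpr hm
    rwa [map_ofNat] at h
  haveI : CharP k 2 := by
    constructor
    intro x
    have hx2 : (x : k) = ((x % 2 : ℕ) : k) := by
      conv_lhs => rw [← Nat.mod_add_div x 2]
      push_cast
      rw [Nat.cast_mul, Nat.cast_ofNat, h2k]
      ring
    constructor
    · intro hx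
      rw [hx2] at hx
      rcases Nat.mod_two_eq_zero_or_one x with h | h
      · exact Nat.dvd_of_mod_eq_zero h
      · rw [h] at hx; norm_num at hx
    · rintro ⟨y, rfl⟩
      push_cast
      rw [h2k, zero_mul]
  set ψ : ZMod 2 →+* k := ZMod.castHom dvd_rfl k with hψdef
  have hρl : ∀ a : ZMod 2, ρ (l a) = ψ a := by
    intro a
    have ha : a = 0 ∨ a = 1 := by revert a; decide
    rcases ha with h | h <;> subst h
    · have h0 : ((0 : ZMod 2).val : ℤ) = 0 := by decide
      rw [hldef]; dsimp only; rw [h0, Int.cast_zero, map_zero, map_zero]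
    · have h1 : ((1 : ZMod 2).val : ℤ) = 1 := by decide
      rw [hldef]; dsimp only; rw [h1, Int.cast_one, _root_.map_one, _root_.map_one]
  have hρc : ρ c = 1 := by
    have h := congrArg ρ hc
    rw [_root_.map_mul, _root_.map_one, map_ofNat] at h
    have h3k : (3 : k) = 1 := by
      have h31 : (3 : k) = 2 + 1 := by norm_num
      rw [h31, h2k, zero_add]
    rwa [h3k, one_mul] at h
  have hmapρ : ∀ (P : Matrix (Fin n) (Fin n) R) (w : Fin n → R) (x : Fin n),
      ρ ((P.mulVec w) x) = ((P.map ρ).mulVec (fun z => ρ (w z))) x := by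
    intro P w x
    simp [Matrix.mulVec, dotProduct, map_sum, _root_.map_mul]
  have hmapψ : ∀ (P : Matrix (Fin n) (Fin n) (ZMod 2)) (w : Fin n → ZMod 2) (x : Fin n),
      ψ ((P.mulVec w) x) = ((P.map ψ).mulVec (fun z => ψ (w z))) x := by
    intro P w x
    simp [Matrix.mulVec, dotProduct, map_sum, _root_.map_mul]
  have hMk : M.map ρ = A₂.map ψ := by
    rw [hMdef, hA₂def, Matrix.map_map, Matrix.map_map]
    ext x y
    simp only [Matrix.map_apply, Function.comp_apply]
    rw [map_intCast, map_intCast]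
  have hXk : X.map ρ = (A₂.map ψ) * (A₂.map ψ) + (A₂.map ψ) + 1 := by
    have h : X.map ρ = ρ.mapMatrix X := rfl
    rw [h, hXdef, _root_.map_add, _root_.map_add, _root_.map_mul, _root_.map_one]
    simp [RingHom.mapMatrix_apply, hMk]
  have hεk : ε.map ψ = (A₂.map ψ) * (A₂.map ψ) + (A₂.map ψ) + 1 := by
    have h : ε.map ψ = ψ.mapMatrix ε := rfl
    rw [h, hεdef, _root_.map_add, _root_.map_add, _root_.map_mul, _root_.map_one]
    simp [RingHom.mapMatrix_apply]
  have hek : e₁.map ρ = ε.map ψ := by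
    have h : e₁.map ρ = X.map ρ := by
      ext x y
      rw [he₁def]
      simp only [Matrix.map_apply, Matrix.smul_apply, smul_eq_mul, _root_.map_mul]
      rw [hρc, one_mul]
    rw [h, hXk, hεk]
  have hfk : f₁.map ρ = (1 - ε).map ψ := by
    have h1 : f₁.map ρ = ρ.mapMatrix (1 - e₁) := rfl
    have h2 : (1 - ε).map ψ = ψ.mapMatrix (1 - ε) := rfl
    rw [h1, h2, _root_.map_sub, _root_.map_sub, _root_.map_one, _root_.map_one]
    rw [RingHom.mapMatrix_apply, RingHom.mapMatrix_apply, hek]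
  have hvW : ∀ j, v j ∈ W := by
    intro j
    rw [← hspan]
    refine Submodule.subset_span ⟨(0, j), ?_⟩
    simp [hFdef]
  have hvker : ∀ j, ε.mulVec (v j) = 0 := fun j => (hWmem _).mp (hvW j)
  have hker0 : ∀ j x, ρ ((f₁.mulVec fun z => l (v j z)) x) = ψ (v j x) := by
    intro j x
    rw [hmapρ]
    have hv1 : (fun z => ρ (l (v j z))) = fun z => ψ (v j z) := by
      funext z; exact hρl _
    rw [hv1, hfk, ← hmapψ]
    congr 1
    rw [Matrix.sub_mulVec, Matrix.one_mulVec, hvker, sub_zero]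
  have hWvres : ∀ (i : Fin r ⊕ Fin 2 × Fin p) (x : Fin n),
      ρ (Wv i x) = ψ (Bfam i x) := by
    rintro (i | ⟨s, j⟩) x
    · rw [hWvdef, hBfamdef]
      simp only [Sum.elim_inl]
      rw [hmapρ]
      have hv1 : (fun z => ρ (l (u i z))) = fun z => ψ (u i z) := by
        funext z; exact hρl _
      rw [hv1, hek, ← hmapψ]
      congr 1
      exact congrFun (hUfix (u i) (bU i).2) x
    · fin_cases s
      · show ρ ((f₁.mulVec fun z => l (v j z)) x) = ψ (v j x)
        exact hker0 j x
      · show ρ ((M.mulVec (f₁.mulVec fun z => l (v j z))) x) = ψ (φ (v j) x)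
        rw [hmapρ]
        have hv1 : (fun z => ρ ((f₁.mulVec fun w => l (v j w)) z)) = fun z => ψ (v j z) := by
          funext z; exact hker0 j z
        rw [hv1, hMk, ← hmapψ]
        rw [hφdef, Matrix.mulVecLin_apply]
  -- compare with the basis matrix over the residue field
  set B' : Basis (Fin n) (ZMod 2) (Fin n → ZMod 2) := B.reindex e.symm with hB'def
  set G₀ : Matrix (Fin n) (Fin n) (ZMod 2) :=
    (Pi.basisFun (ZMod 2) (Fin n)).toMatrix B' with hG₀def
  haveI := (Pi.basisFun (ZMod 2) (Fin n)).invertibleToMatrix B'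
  have hG₀unit : IsUnit G₀.det := by
    rw [← Matrix.isUnit_iff_isUnit_det]
    exact isUnit_of_invertible G₀
  have hGres : G.map ρ = G₀.map ψ := by
    ext x y
    rw [Matrix.map_apply, Matrix.map_apply, hGdef, Matrix.of_apply, hWvres]
    congr 1
    rw [hG₀def, Basis.toMatrix_apply, Pi.basisFun_repr, hB'def, Basis.reindex_apply,
      Equiv.symm_symm, hBdef, Basis.coe_mk]
  have hdet : ρ G.det = ψ G₀.det := by
    rw [RingHom.map_det, RingHom.map_det, RingHom.mapMatrix_apply,
      RingHom.mapMatrix_apply, hGres]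
  have hGdetne : ρ G.det ≠ 0 := by
    rw [hdet]
    exact (hG₀unit.map ψ).ne_zero
  have hGunit : IsUnit G := by
    rw [Matrix.isUnit_iff_isUnit_det]
    by_contra hdG
    exact hGdetne ((IsLocalRing.residue_eq_zero_iff _).mpr
      ((IsLocalRing.mem_maximalIdeal _).mpr (mem_nonunits_iff.mpr hdG)))
  have hdetG : IsUnit G.det := (Matrix.isUnit_iff_isUnit_det G).mp hGunit
  obtain ⟨g, hg⟩ := hGunit
  refine ⟨g, ?_⟩
  have hGinv : G * G⁻¹ = 1 := Matrix.mul_nonsing_inv G hdetG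
  rw [Matrix.coe_units_inv, hg]
  calc M = M * (G * G⁻¹) := by rw [hGinv, mul_one]
  _ = (M * G) * G⁻¹ := by rw [mul_assoc]
  _ = G * Bblk.submatrix ⇑e ⇑e * G⁻¹ := by rw [hMG]
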